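/- Fix r and s with r = 2s+1, and suppose α(G(n,r,s)) ≤ C₀ n^s. Let Γ be a maximum independent set in the induced subgraph of G(n,r,s) on W, and let U₂ be the set of w ∈ W \ Γ with exactly two neighbors in Γ. Then |U₂| ≤ C₃ n^{2s} for a constant C₃ depending only on r and s. -/

import Mathlib

/-- The Johnson-type graph `G(n,r,s)`: vertices are the `r`-element subsets of
`{1,…,n}` (modeled as `Finset (Fin n)` of cardinality `r`), two distinct vertices
adjacent iff their intersection has size exactly `s`. -/
def johnson (n r s : ℕ) : SimpleGraph {A : Finset (Fin n) // A.card = r} where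
  Adj A B := A ≠ B ∧ (A.1 ∩ B.1).card = s
  symm := ⟨by
    intro A B h
    exact ⟨h.1.symm, by rw [Finset.inter_comm]; exact h.2⟩⟩
  loopless := ⟨by intro A h; exact h.1 rfl⟩

instance (n r s : ℕ) : DecidableRel (johnson n r s).Adj := fun A B =>
  inferInstanceAs (Decidable (A ≠ B ∧ (A.1 ∩ B.1).card = s))

/-- `Γ` is an independent set of vertices in `G`. -/
def IsIndep {V : Type*} (G : SimpleGraph V) (Γ : Finset V) : Prop :=
  ∀ x ∈ Γ, ∀ y ∈ Γ, ¬ G.Adj x y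

/-- The number of edges of `G` with both endpoints in `W`. -/
def edgeCount {V : Type*} [DecidableEq V] (G : SimpleGraph V) [DecidableRel G.Adj]
    (W : Finset V) : ℕ :=
  ((W ×ˢ W).filter fun p => G.Adj p.1 p.2).card / 2

namespace Stmt6Aux

variable {n r s : ℕ}

/-- Swap argument: if every element of `I ⊆ W \ Γ` has `Γ`-neighbourhood exactly the
2-element set `P`, and `I` is independent, then `|I| ≤ 2` by maximality of `Γ`. -/
lemma swap_bound {W Γ : Finset {A : Finset (Fin n) // A.card = r}}
    (hΓW : Γ ⊆ W) (hind : IsIndep (johnson n r s) Γ)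
    (hmax : ∀ Γ' ⊆ W, IsIndep (johnson n r s) Γ' → Γ'.card ≤ Γ.card)
    {P : Finset {A : Finset (Fin n) // A.card = r}} (hPΓ : P ⊆ Γ) (hP2 : P.card = 2)
    {I : Finset {A : Finset (Fin n) // A.card = r}} (hIW : I ⊆ W) (hIΓ : ∀ w ∈ I, w ∉ Γ)
    (hIfib : ∀ w ∈ I, Γ.filter (fun x => (johnson n r s).Adj x w) = P)
    (hIind : IsIndep (johnson n r s) I) :
    I.card ≤ 2 := by
  have hdisj : Disjoint (Γ \ P) I := by
    rw [Finset.disjoint_left]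
    intro a ha haI
    exact hIΓ a haI (Finset.mem_sdiff.mp ha).1
  have hsub : (Γ \ P) ∪ I ⊆ W := by
    intro a ha
    rcases Finset.mem_union.mp ha with h | h
    · exact hΓW (Finset.mem_sdiff.mp h).1
    · exact hIW h
  have key : ∀ a ∈ Γ \ P, ∀ b ∈ I, ¬ (johnson n r s).Adj a b := by
    intro a ha b hb hadj
    have h1 : a ∈ Γ.filter (fun x => (johnson n r s).Adj x b) :=
      Finset.mem_filter.mpr ⟨(Finset.mem_sdiff.mp ha).1, hadj⟩
    rw [hIfib b hb] at h1
    exact (Finset.mem_sdiff.mp ha).2 h1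
  have hindep : IsIndep (johnson n r s) ((Γ \ P) ∪ I) := by
    intro a ha b hb
    rcases Finset.mem_union.mp ha with ha' | ha' <;> rcases Finset.mem_union.mp hb with hb' | hb'
    · exact hind a (Finset.mem_sdiff.mp ha').1 b (Finset.mem_sdiff.mp hb').1
    · exact key a ha' b hb'
    · intro hadj; exact key b hb' a ha' hadj.symm
    · exact hIind a ha' b hb'
  have h1 := hmax _ hsub hindep
  rw [Finset.card_union_of_disjoint hdisj, Finset.card_sdiff_of_subset hPΓ, hP2] at h1
  have h2 : 2 ≤ Γ.card := hP2 ▸ Finset.card_le_card hPΓ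
  omega

lemma fiber_le (hr : r = 2 * s + 1) {W Γ : Finset {A : Finset (Fin n) // A.card = r}}
    (hΓW : Γ ⊆ W) (hind : IsIndep (johnson n r s) Γ)
    (hmax : ∀ Γ' ⊆ W, IsIndep (johnson n r s) Γ' → Γ'.card ≤ Γ.card)
    {P : Finset {A : Finset (Fin n) // A.card = r}} (hPΓ : P ⊆ Γ) (hP2 : P.card = 2) :
    (((W \ Γ).filter (fun w => Γ.filter (fun x => (johnson n r s).Adj x w) = P)).card
      ≤ r.choose s * (2 * n))
    ∧ (r.choose s * (2 * r) <
        ((W \ Γ).filter (fun w => Γ.filter (fun x => (johnson n r s).Adj x w) = P)).card →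
       ∃ S ∈ (Finset.univ : Finset (Fin n)).powersetCard s,
         Γ.filter (fun z => S ⊆ z.1) = P) := by
  classical
  obtain ⟨x, hxP⟩ : ∃ x, x ∈ P := (Finset.card_pos.mp (by omega)).imp (fun _ h => h)
  set F := (W \ Γ).filter (fun w => Γ.filter (fun x => (johnson n r s).Adj x w) = P) with hF
  have hFW : ∀ w ∈ F, w ∈ W := fun w hw => (Finset.mem_sdiff.mp (Finset.mem_filter.mp hw).1).1
  have hFΓ : ∀ w ∈ F, w ∉ Γ := fun w hw => (Finset.mem_sdiff.mp (Finset.mem_filter.mp hw).1).2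
  have hFg : ∀ w ∈ F, Γ.filter (fun x => (johnson n r s).Adj x w) = P :=
    fun w hw => (Finset.mem_filter.mp hw).2
  have hFadj : ∀ w ∈ F, ∀ z ∈ P, (johnson n r s).Adj z w := by
    intro w hw z hz
    have h1 : z ∈ Γ.filter (fun x => (johnson n r s).Adj x w) := by rw [hFg w hw]; exact hz
    exact (Finset.mem_filter.mp h1).2
  have hFnadj : ∀ w ∈ F, ∀ z ∈ Γ, z ∉ P → ¬ (johnson n r s).Adj z w := by
    intro w hw z hzΓ hzP hadj
    exact hzP (by rw [← hFg w hw]; exact Finset.mem_filter.mpr ⟨hzΓ, hadj⟩)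
  have hScard : ∀ w ∈ F, (x.1 ∩ w.1).card = s := fun w hw => (hFadj w hw x hxP).2
  -- degree bound: each point outside S lies in at most 2 members of each S-fiber
  have hdeg : ∀ S : Finset (Fin n), ∀ u : Fin n, u ∉ S →
      ((F.filter (fun w => x.1 ∩ w.1 = S)).filter (fun w => u ∈ w.1)).card ≤ 2 := by
    intro S u huS
    have hsb : (F.filter (fun w => x.1 ∩ w.1 = S)).filter (fun w => u ∈ w.1) ⊆ F := by
      intro w hw
      exact (Finset.mem_filter.mp (Finset.mem_filter.mp hw).1).1
    apply swap_bound hΓW hind hmax hPΓ hP2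
    · intro w hw; exact hFW w (hsb hw)
    · intro w hw; exact hFΓ w (hsb hw)
    · intro w hw; exact hFg w (hsb hw)
    · intro a ha b hb hadj
      obtain ⟨ha1, hua⟩ := Finset.mem_filter.mp ha
      obtain ⟨haF, hSa⟩ := Finset.mem_filter.mp ha1
      obtain ⟨hb1, hub⟩ := Finset.mem_filter.mp hb
      obtain ⟨hbF, hSb⟩ := Finset.mem_filter.mp hb1
      have hS_s : S.card = s := by rw [← hSa]; exact hScard a haF
      have hSsuba : S ⊆ a.1 := hSa ▸ Finset.inter_subset_right
      have hSsubb : S ⊆ b.1 := hSb ▸ Finset.inter_subset_right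
      have hsub2 : insert u S ⊆ a.1 ∩ b.1 :=
        Finset.insert_subset (Finset.mem_inter.mpr ⟨hua, hub⟩)
          (Finset.subset_inter hSsuba hSsubb)
      have h1 : s + 1 ≤ (a.1 ∩ b.1).card := by
        have := Finset.card_le_card hsub2
        rwa [Finset.card_insert_of_notMem huS, hS_s] at this
      have h2 : (a.1 ∩ b.1).card = s := hadj.2
      omega
  -- size of each S-fiber
  have hTsize : ∀ S : Finset (Fin n),
      (F.filter (fun w => x.1 ∩ w.1 = S)).card ≤ 2 * n := by
    intro S
    have hcov : F.filter (fun w => x.1 ∩ w.1 = S) ⊆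
        (Finset.univ \ S).biUnion
          (fun u => (F.filter (fun w => x.1 ∩ w.1 = S)).filter (fun w => u ∈ w.1)) := by
      intro w hw
      obtain ⟨hwF, hSw⟩ := Finset.mem_filter.mp hw
      have hS_s : S.card = s := by rw [← hSw]; exact hScard w hwF
      have hSsub : S ⊆ w.1 := hSw ▸ Finset.inter_subset_right
      have hne : (w.1 \ S).Nonempty := by
        rw [← Finset.card_pos, Finset.card_sdiff_of_subset hSsub, w.2, hS_s]
        omega
      obtain ⟨u, hu⟩ := hne
      obtain ⟨huw, huS⟩ := Finset.mem_sdiff.mp hu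
      exact Finset.mem_biUnion.mpr ⟨u, Finset.mem_sdiff.mpr ⟨Finset.mem_univ u, huS⟩,
        Finset.mem_filter.mpr ⟨hw, huw⟩⟩
    calc (F.filter (fun w => x.1 ∩ w.1 = S)).card
        ≤ ((Finset.univ \ S).biUnion
            (fun u => (F.filter (fun w => x.1 ∩ w.1 = S)).filter (fun w => u ∈ w.1))).card :=
          Finset.card_le_card hcov
      _ ≤ ∑ u ∈ Finset.univ \ S,
            ((F.filter (fun w => x.1 ∩ w.1 = S)).filter (fun w => u ∈ w.1)).card :=
          Finset.card_biUnion_le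
      _ ≤ ∑ _u ∈ Finset.univ \ S, 2 :=
          Finset.sum_le_sum (fun u hu => hdeg S u (Finset.mem_sdiff.mp hu).2)
      _ = (Finset.univ \ S).card * 2 := by rw [Finset.sum_const, smul_eq_mul]
      _ ≤ n * 2 := by
          apply Nat.mul_le_mul_right
          calc (Finset.univ \ S).card ≤ (Finset.univ : Finset (Fin n)).card :=
                Finset.card_le_card (Finset.sdiff_subset)
            _ = n := by simp
      _ = 2 * n := Nat.mul_comm n 2
  have hdecomp : F.card = ∑ S ∈ x.1.powersetCard s,
      (F.filter (fun w => x.1 ∩ w.1 = S)).card :=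
    Finset.card_eq_sum_card_fiberwise (fun w hw => Finset.mem_powersetCard.mpr
      ⟨Finset.inter_subset_left, hScard w hw⟩)
  constructor
  · calc F.card = ∑ S ∈ x.1.powersetCard s, (F.filter (fun w => x.1 ∩ w.1 = S)).card := hdecomp
      _ ≤ ∑ _S ∈ x.1.powersetCard s, 2 * n := Finset.sum_le_sum (fun S _ => hTsize S)
      _ = (x.1.powersetCard s).card * (2 * n) := by rw [Finset.sum_const, smul_eq_mul]
      _ = r.choose s * (2 * n) := by rw [Finset.card_powersetCard, x.2]
  · intro hlarge
    have hbigS : ∃ S ∈ x.1.powersetCard s,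
        2 * r < (F.filter (fun w => x.1 ∩ w.1 = S)).card := by
      by_contra hno
      push_neg at hno
      have h1 : F.card ≤ ∑ _S ∈ x.1.powersetCard s, 2 * r :=
        hdecomp ▸ Finset.sum_le_sum hno
      rw [Finset.sum_const, smul_eq_mul, Finset.card_powersetCard, x.2] at h1
      exact absurd h1 (Nat.not_le.mpr hlarge)
    obtain ⟨S, _hSmem, hSbig⟩ := hbigS
    -- pigeonhole: for each vertex z there is a member of the S-fiber avoiding z outside S
    have hpig : ∀ z : {A : Finset (Fin n) // A.card = r},
        ∃ w ∈ F.filter (fun w => x.1 ∩ w.1 = S), z.1 ∩ w.1 ⊆ S := by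
      intro z
      have hbadcov : (F.filter (fun w => x.1 ∩ w.1 = S)).filter
            (fun w => ¬ (z.1 ∩ w.1 ⊆ S)) ⊆
          (z.1 \ S).biUnion
            (fun u => (F.filter (fun w => x.1 ∩ w.1 = S)).filter (fun w => u ∈ w.1)) := by
        intro w hw
        obtain ⟨hwT, hns⟩ := Finset.mem_filter.mp hw
        obtain ⟨u, hu, huS⟩ := Finset.not_subset.mp hns
        obtain ⟨huz, huw⟩ := Finset.mem_inter.mp hu
        exact Finset.mem_biUnion.mpr ⟨u, Finset.mem_sdiff.mpr ⟨huz, huS⟩,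
          Finset.mem_filter.mpr ⟨hwT, huw⟩⟩
      have hbad : ((F.filter (fun w => x.1 ∩ w.1 = S)).filter
            (fun w => ¬ (z.1 ∩ w.1 ⊆ S))).card ≤ 2 * r := by
        calc ((F.filter (fun w => x.1 ∩ w.1 = S)).filter (fun w => ¬ (z.1 ∩ w.1 ⊆ S))).card
            ≤ ((z.1 \ S).biUnion
                (fun u => (F.filter (fun w => x.1 ∩ w.1 = S)).filter (fun w => u ∈ w.1))).card :=
              Finset.card_le_card hbadcov
          _ ≤ ∑ u ∈ z.1 \ S,
                ((F.filter (fun w => x.1 ∩ w.1 = S)).filter (fun w => u ∈ w.1)).card :=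
              Finset.card_biUnion_le
          _ ≤ ∑ _u ∈ z.1 \ S, 2 :=
              Finset.sum_le_sum (fun u hu => hdeg S u (Finset.mem_sdiff.mp hu).2)
          _ = (z.1 \ S).card * 2 := by rw [Finset.sum_const, smul_eq_mul]
          _ ≤ r * 2 := by
              apply Nat.mul_le_mul_right
              calc (z.1 \ S).card ≤ z.1.card := Finset.card_le_card (Finset.sdiff_subset)
                _ = r := z.2
          _ = 2 * r := Nat.mul_comm r 2
      by_contra hno
      push_neg at hno
      have hall : F.filter (fun w => x.1 ∩ w.1 = S) ⊆
          (F.filter (fun w => x.1 ∩ w.1 = S)).filter (fun w => ¬ (z.1 ∩ w.1 ⊆ S)) :=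
        fun w hw => Finset.mem_filter.mpr ⟨hw, hno w hw⟩
      have := Finset.card_le_card hall
      omega
    have hTne : ∃ w₀, w₀ ∈ F.filter (fun w => x.1 ∩ w.1 = S) := by
      have : 0 < (F.filter (fun w => x.1 ∩ w.1 = S)).card := by omega
      exact (Finset.card_pos.mp this).imp (fun _ h => h)
    obtain ⟨w₀, hw₀⟩ := hTne
    obtain ⟨hw₀F, hSw₀⟩ := Finset.mem_filter.mp hw₀
    have hS_s : S.card = s := by rw [← hSw₀]; exact hScard w₀ hw₀F
    refine ⟨S, Finset.mem_powersetCard.mpr ⟨Finset.subset_univ S, hS_s⟩, ?_⟩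
    ext z
    simp only [Finset.mem_filter]
    constructor
    · rintro ⟨hzΓ, hSz⟩
      by_contra hzP
      obtain ⟨w, hwT, hzw⟩ := hpig z
      obtain ⟨hwF, hSw⟩ := Finset.mem_filter.mp hwT
      have hSsubw : S ⊆ w.1 := hSw ▸ Finset.inter_subset_right
      have heq : z.1 ∩ w.1 = S :=
        Finset.Subset.antisymm hzw (Finset.subset_inter hSz hSsubw)
      have hne : z ≠ w := fun h => hFΓ w hwF (h ▸ hzΓ)
      exact hFnadj w hwF z hzΓ hzP ⟨hne, by rw [heq, hS_s]⟩
    · intro hzP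
      refine ⟨hPΓ hzP, ?_⟩
      obtain ⟨w, hwT, hzw⟩ := hpig z
      obtain ⟨hwF, _hSw⟩ := Finset.mem_filter.mp hwT
      have hadj := hFadj w hwF z hzP
      have hcard2 : (z.1 ∩ w.1).card = s := hadj.2
      have heq : z.1 ∩ w.1 = S :=
        Finset.eq_of_subset_of_card_le hzw (by rw [hcard2, hS_s])
      rw [← heq]
      exact Finset.inter_subset_left

end Stmt6Aux

theorem stmt6 (r s C₀ : ℕ) (hr : r = 2 * s + 1)
    (hα : ∀ n : ℕ, ∀ Γ : Finset {A : Finset (Fin n) // A.card = r},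
      IsIndep (johnson n r s) Γ → Γ.card ≤ C₀ * n ^ s) :
    ∃ C₃ : ℕ, ∀ n : ℕ, ∀ W Γ : Finset {A : Finset (Fin n) // A.card = r},
      Γ ⊆ W → IsIndep (johnson n r s) Γ →
      (∀ Γ' ⊆ W, IsIndep (johnson n r s) Γ' → Γ'.card ≤ Γ.card) →
      ((W \ Γ).filter
          (fun w => (Γ.filter (fun x => (johnson n r s).Adj x w)).card = 2)).card
        ≤ C₃ * n ^ (2 * s) := by
  rcases Nat.eq_zero_or_pos s with hs0 | hs1
  · -- s = 0 : then r = 1 and Γ has at most one element, so the set is empty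
    refine ⟨0, ?_⟩
    intro n W Γ hΓW hind hmax
    have hempty : ((W \ Γ).filter
        (fun w => (Γ.filter (fun x => (johnson n r s).Adj x w)).card = 2)) = ∅ := by
      rw [Finset.filter_eq_empty_iff]
      intro w _hw hcard
      obtain ⟨a, b, hab, hfil⟩ := Finset.card_eq_two.mp hcard
      have ha : a ∈ Γ.filter (fun x => (johnson n r s).Adj x w) := by
        rw [hfil]; exact Finset.mem_insert_self a {b}
      have hb : b ∈ Γ.filter (fun x => (johnson n r s).Adj x w) := by
        rw [hfil]; exact Finset.mem_insert_of_mem (Finset.mem_singleton_self b)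
      have haΓ : a ∈ Γ := (Finset.mem_filter.mp ha).1
      have hbΓ : b ∈ Γ := (Finset.mem_filter.mp hb).1
      have hr1 : r = 1 := by omega
      obtain ⟨p, hp⟩ := Finset.card_eq_one.mp (by rw [← hr1]; exact a.2)
      obtain ⟨q, hq⟩ := Finset.card_eq_one.mp (by rw [← hr1]; exact b.2)
      have hpq : p ≠ q := by
        intro h
        apply hab
        apply Subtype.ext
        rw [hp, hq, h]
      have hint : (a.1 ∩ b.1).card = s := by
        rw [hp, hq, Finset.singleton_inter_of_notMem (by simpa using hpq), hs0]
        simp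
      exact hind a haΓ b hbΓ ⟨hab, hint⟩
    rw [hempty]
    simp
  · -- main case s ≥ 1
    refine ⟨2 * r.choose s + C₀ ^ 2 * (r.choose s * (2 * r)), ?_⟩
    intro n W Γ hΓW hind hmax
    classical
    set U₂ := (W \ Γ).filter
      (fun w => (Γ.filter (fun x => (johnson n r s).Adj x w)).card = 2) with hU₂
    have hmemU : ∀ w ∈ U₂,
        (Γ.filter (fun x => (johnson n r s).Adj x w)) ∈ Γ.powersetCard 2 := by
      intro w hw
      exact Finset.mem_powersetCard.mpr ⟨Finset.filter_subset _ _, (Finset.mem_filter.mp hw).2⟩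
    have hdecomp : U₂.card = ∑ P ∈ Γ.powersetCard 2,
        (U₂.filter (fun w => (Γ.filter (fun x => (johnson n r s).Adj x w)) = P)).card :=
      Finset.card_eq_sum_card_fiberwise hmemU
    have hsubfib : ∀ P : Finset {A : Finset (Fin n) // A.card = r},
        U₂.filter (fun w => (Γ.filter (fun x => (johnson n r s).Adj x w)) = P) ⊆
        (W \ Γ).filter (fun w => (Γ.filter (fun x => (johnson n r s).Adj x w)) = P) := by
      intro P w hw
      obtain ⟨hwU, hgw⟩ := Finset.mem_filter.mp hw
      exact Finset.mem_filter.mpr ⟨(Finset.mem_filter.mp hwU).1, hgw⟩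
    set RichP := fun P : Finset {A : Finset (Fin n) // A.card = r} =>
      ∃ S ∈ (Finset.univ : Finset (Fin n)).powersetCard s,
        Γ.filter (fun z => S ⊆ z.1) = P with hRichP
    rw [← Finset.sum_filter_add_sum_filter_not (Γ.powersetCard 2) RichP] at hdecomp
    -- bound on the rich part
    have hrichcard : ((Γ.powersetCard 2).filter RichP).card ≤ n.choose s := by
      have h1 : ((Γ.powersetCard 2).filter RichP).card ≤
          ((Finset.univ : Finset (Fin n)).powersetCard s).card := by
        apply Finset.card_le_card_of_injOn
          (fun P => if h : RichP P then h.choose else ∅)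
        · intro P hP
          have hR : RichP P := (Finset.mem_filter.mp hP).2
          simp only [dif_pos hR]
          exact hR.choose_spec.1
        · intro P hP Q hQ hfeq
          have hRP : RichP P := (Finset.mem_filter.mp hP).2
          have hRQ : RichP Q := (Finset.mem_filter.mp hQ).2
          simp only [dif_pos hRP, dif_pos hRQ] at hfeq
          rw [← hRP.choose_spec.2, ← hRQ.choose_spec.2, hfeq]
      rwa [Finset.card_powersetCard, Finset.card_univ, Fintype.card_fin] at h1
    have hbound1 : ∑ P ∈ (Γ.powersetCard 2).filter RichP,
        (U₂.filter (fun w => (Γ.filter (fun x => (johnson n r s).Adj x w)) = P)).card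
        ≤ n.choose s * (r.choose s * (2 * n)) := by
      calc ∑ P ∈ (Γ.powersetCard 2).filter RichP,
            (U₂.filter (fun w => (Γ.filter (fun x => (johnson n r s).Adj x w)) = P)).card
          ≤ ∑ _P ∈ (Γ.powersetCard 2).filter RichP, r.choose s * (2 * n) := by
            apply Finset.sum_le_sum
            intro P hP
            have hPm := Finset.mem_filter.mp hP
            obtain ⟨hPΓ, hP2⟩ := Finset.mem_powersetCard.mp hPm.1
            calc (U₂.filter (fun w => (Γ.filter (fun x => (johnson n r s).Adj x w)) = P)).card
                ≤ ((W \ Γ).filter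
                    (fun w => (Γ.filter (fun x => (johnson n r s).Adj x w)) = P)).card :=
                  Finset.card_le_card (hsubfib P)
              _ ≤ r.choose s * (2 * n) :=
                  (Stmt6Aux.fiber_le hr hΓW hind hmax hPΓ hP2).1
        _ = ((Γ.powersetCard 2).filter RichP).card * (r.choose s * (2 * n)) := by
            rw [Finset.sum_const, smul_eq_mul]
        _ ≤ n.choose s * (r.choose s * (2 * n)) :=
            Nat.mul_le_mul_right _ hrichcard
    -- bound on the non-rich part
    have hbound2 : ∑ P ∈ (Γ.powersetCard 2).filter (fun P => ¬ RichP P),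
        (U₂.filter (fun w => (Γ.filter (fun x => (johnson n r s).Adj x w)) = P)).card
        ≤ (Γ.powersetCard 2).card * (r.choose s * (2 * r)) := by
      calc ∑ P ∈ (Γ.powersetCard 2).filter (fun P => ¬ RichP P),
            (U₂.filter (fun w => (Γ.filter (fun x => (johnson n r s).Adj x w)) = P)).card
          ≤ ∑ _P ∈ (Γ.powersetCard 2).filter (fun P => ¬ RichP P), r.choose s * (2 * r) := by
            apply Finset.sum_le_sum
            intro P hP
            have hPm := Finset.mem_filter.mp hP
            obtain ⟨hPΓ, hP2⟩ := Finset.mem_powersetCard.mp hPm.1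
            by_contra hlt
            push_neg at hlt
            have h2 : r.choose s * (2 * r) <
                ((W \ Γ).filter
                  (fun w => (Γ.filter (fun x => (johnson n r s).Adj x w)) = P)).card :=
              lt_of_lt_of_le hlt (Finset.card_le_card (hsubfib P))
            exact hPm.2 ((Stmt6Aux.fiber_le hr hΓW hind hmax hPΓ hP2).2 h2)
        _ = ((Γ.powersetCard 2).filter (fun P => ¬ RichP P)).card * (r.choose s * (2 * r)) := by
            rw [Finset.sum_const, smul_eq_mul]
        _ ≤ (Γ.powersetCard 2).card * (r.choose s * (2 * r)) :=
            Nat.mul_le_mul_right _ (Finset.card_le_card (Finset.filter_subset _ _))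
    -- counting estimates
    have hΓcard : Γ.card ≤ C₀ * n ^ s := hα n Γ hind
    have hpairs : (Γ.powersetCard 2).card ≤ C₀ ^ 2 * n ^ (2 * s) := by
      rw [Finset.card_powersetCard]
      calc Γ.card.choose 2 ≤ Γ.card * Γ.card := by
            rw [Nat.choose_two_right]
            calc Γ.card * (Γ.card - 1) / 2 ≤ Γ.card * (Γ.card - 1) := Nat.div_le_self _ _
              _ ≤ Γ.card * Γ.card := Nat.mul_le_mul_left _ (by omega)
        _ ≤ (C₀ * n ^ s) * (C₀ * n ^ s) := Nat.mul_le_mul hΓcard hΓcard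
        _ = C₀ ^ 2 * n ^ (2 * s) := by ring
    have hchoose : n.choose s ≤ n ^ s := Nat.choose_le_pow n s
    have hpow : n ^ (s + 1) ≤ n ^ (2 * s) := by
      rcases Nat.eq_zero_or_pos n with hn | hn
      · subst hn
        rw [Nat.zero_pow (by omega), Nat.zero_pow (by omega)]
      · exact Nat.pow_le_pow_right hn (by omega)
    calc U₂.card
        = ∑ P ∈ (Γ.powersetCard 2).filter RichP,
            (U₂.filter (fun w => (Γ.filter (fun x => (johnson n r s).Adj x w)) = P)).card
          + ∑ P ∈ (Γ.powersetCard 2).filter (fun P => ¬ RichP P),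
            (U₂.filter (fun w => (Γ.filter (fun x => (johnson n r s).Adj x w)) = P)).card :=
          hdecomp
      _ ≤ n.choose s * (r.choose s * (2 * n))
          + (Γ.powersetCard 2).card * (r.choose s * (2 * r)) := Nat.add_le_add hbound1 hbound2
      _ ≤ n ^ s * (r.choose s * (2 * n))
          + (C₀ ^ 2 * n ^ (2 * s)) * (r.choose s * (2 * r)) :=
          Nat.add_le_add (Nat.mul_le_mul_right _ hchoose) (Nat.mul_le_mul_right _ hpairs)
      _ = 2 * r.choose s * n ^ (s + 1)
          + C₀ ^ 2 * (r.choose s * (2 * r)) * n ^ (2 * s) := by ring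
      _ ≤ 2 * r.choose s * n ^ (2 * s)
          + C₀ ^ 2 * (r.choose s * (2 * r)) * n ^ (2 * s) :=
          Nat.add_le_add_right (Nat.mul_le_mul_left _ hpow) _
      _ = (2 * r.choose s + C₀ ^ 2 * (r.choose s * (2 * r))) * n ^ (2 * s) := by ring
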